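/- Let $\ell(z;\theta)\in[0,1]$ be nonincreasing and right-continuous in $\theta$, with $\lim_{\theta\to\infty}\ell(z;\theta)=0$ for every $z$, let $\alpha\in(\frac{1}{n+1},1]$, let $(Z_1,\ldots,Z_{n+1})$ be exchangeable, and define $\hat\theta = \inf\{\theta: \frac{1}{n+1}\sum_{i=1}^{n}\ell(Z_i;\theta)\le\alpha-\frac{1}{n+1}\}$. Then $\mathbb{E}[\ell(Z_{n+1};\hat\theta)]\le\alpha$. -/

import Mathlib

open MeasureTheory Filter

section CRCAux

/-- Key lemma: for an antitone, right-continuous function tending to `0` at `+∞`, and `c > 0`,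
the (real) infimum of the sublevel set `{θ | f θ ≤ c}` is itself in the set. -/
private lemma crc_key_mem (f : ℝ → ℝ) (hf : Antitone f)
    (hrc : ∀ θ, ContinuousWithinAt f (Set.Ici θ) θ)
    (hlim : Tendsto f atTop (nhds 0)) {c : ℝ} (hc : 0 < c) :
    f (sInf {θ | f θ ≤ c}) ≤ c := by
  set S := {θ | f θ ≤ c} with hS
  have hne : S.Nonempty := by
    obtain ⟨θ, hθ⟩ := (hlim.eventually_lt_const hc).exists
    exact ⟨θ, hθ.le⟩
  by_cases hb : BddBelow S
  · have h1 : ∀ θ, sInf S < θ → θ ∈ S := by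
      intro θ hθ
      obtain ⟨x, hx, hxθ⟩ := (csInf_lt_iff hb hne).mp hθ
      exact le_trans (hf hxθ.le) hx
    have h2 : Tendsto f (nhdsWithin (sInf S) (Set.Ioi (sInf S))) (nhds (f (sInf S))) :=
      (hrc (sInf S)).mono_left (nhdsWithin_mono _ Set.Ioi_subset_Ici_self)
    refine le_of_tendsto h2 ?_
    filter_upwards [self_mem_nhdsWithin] with θ hθ
    exact h1 θ hθ
  · rw [Real.sInf_of_not_bddBelow hb]
    obtain ⟨x, hx, hx0⟩ := not_bddBelow_iff.mp hb 0
    exact le_trans (hf hx0.le) hx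

private lemma crc_key_le_iff (f : ℝ → ℝ) (hf : Antitone f)
    (hrc : ∀ θ, ContinuousWithinAt f (Set.Ici θ) θ)
    (hlim : Tendsto f atTop (nhds 0)) {c : ℝ} (hc : 0 < c) (θ : ℝ) :
    sInf {θ' | f θ' ≤ c} ≤ θ ↔
      ((BddBelow {θ' | f θ' ≤ c} ∧ f θ ≤ c) ∨ (¬BddBelow {θ' | f θ' ≤ c} ∧ 0 ≤ θ)) := by
  by_cases hb : BddBelow {θ' | f θ' ≤ c}
  · simp only [hb, true_and, not_true, false_and, or_false]
    constructor
    · intro h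
      exact le_trans (hf h) (crc_key_mem f hf hrc hlim hc)
    · intro h
      exact csInf_le hb h
  · simp only [hb, false_and, not_false_iff, true_and, false_or]
    rw [Real.sInf_of_not_bddBelow hb]

private lemma crc_key_unbdd (f : ℝ → ℝ) (hf : Antitone f) (c : ℝ) :
    ¬BddBelow {θ | f θ ≤ c} ↔ ∀ q : ℤ, f q ≤ c := by
  constructor
  · intro hb q
    obtain ⟨x, hx, hxq⟩ := not_bddBelow_iff.mp hb q
    exact le_trans (hf hxq.le) hx
  · intro hq hb
    obtain ⟨b, hbb⟩ := hb
    obtain ⟨q, hqb⟩ := exists_int_lt b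
    exact absurd (hbb (hq q)) (not_le.mpr hqb)

variable {𝒵 : Type*}

/-- The conformal threshold computed from all coordinates except `j`. -/
noncomputable def crcInf (ℓ : 𝒵 → ℝ → ℝ) (c : ℝ) {m : ℕ} (v : Fin m → 𝒵) (j : Fin m) : ℝ :=
  sInf {θ | ∑ i ∈ Finset.univ.erase j, ℓ (v i) θ ≤ c}

/-- The minimum of the leave-one-out conformal thresholds; a symmetric function. -/
noncomputable def crcMin (ℓ : 𝒵 → ℝ → ℝ) (c : ℝ) {n : ℕ} (v : Fin (n + 1) → 𝒵) : ℝ :=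
  Finset.univ.inf' Finset.univ_nonempty (fun j => crcInf ℓ c v j)

variable (ℓ : 𝒵 → ℝ → ℝ)

private lemma crc_eSum_antitone (hmono : ∀ w, Antitone (ℓ w)) {m : ℕ} (v : Fin m → 𝒵)
    (j : Fin m) :
    Antitone (fun θ => ∑ i ∈ Finset.univ.erase j, ℓ (v i) θ) :=
  fun _ _ hab => Finset.sum_le_sum fun i _ => hmono (v i) hab

private lemma crc_eSum_rc (hrc : ∀ w θ, ContinuousWithinAt (ℓ w) (Set.Ici θ) θ)
    {m : ℕ} (v : Fin m → 𝒵) (j : Fin m) (θ : ℝ) :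
    ContinuousWithinAt (fun θ => ∑ i ∈ Finset.univ.erase j, ℓ (v i) θ) (Set.Ici θ) θ :=
  tendsto_finset_sum _ (fun i _ => hrc (v i) θ)

private lemma crc_eSum_lim (hlim : ∀ w, Tendsto (ℓ w) atTop (nhds 0))
    {m : ℕ} (v : Fin m → 𝒵) (j : Fin m) :
    Tendsto (fun θ => ∑ i ∈ Finset.univ.erase j, ℓ (v i) θ) atTop (nhds 0) := by
  have := tendsto_finset_sum (f := fun (i : Fin m) θ => ℓ (v i) θ) (a := fun _ => (0 : ℝ))
    (Finset.univ.erase j) (fun i _ => hlim (v i))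
  simpa using this

private lemma crcInf_mem (hmono : ∀ w, Antitone (ℓ w))
    (hrc : ∀ w θ, ContinuousWithinAt (ℓ w) (Set.Ici θ) θ)
    (hlim : ∀ w, Tendsto (ℓ w) atTop (nhds 0)) {c : ℝ} (hc : 0 < c)
    {m : ℕ} (v : Fin m → 𝒵) (j : Fin m) :
    ∑ i ∈ Finset.univ.erase j, ℓ (v i) (crcInf ℓ c v j) ≤ c :=
  crc_key_mem _ (crc_eSum_antitone ℓ hmono v j) (crc_eSum_rc ℓ hrc v j)
    (crc_eSum_lim ℓ hlim v j) hc

variable [MeasurableSpace 𝒵]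

private lemma crc_eSum_measurable (hℓmeas : Measurable (fun p : 𝒵 × ℝ => ℓ p.1 p.2))
    {m : ℕ} (j : Fin m) (θ : ℝ) :
    Measurable (fun v : Fin m → 𝒵 => ∑ i ∈ Finset.univ.erase j, ℓ (v i) θ) :=
  Finset.measurable_sum (f := fun (i : Fin m) (v : Fin m → 𝒵) => ℓ (v i) θ) _ fun i _ => by
    have h : Measurable (fun v : Fin m → 𝒵 => ((v i, θ) : 𝒵 × ℝ)) :=
      (measurable_pi_apply i).prodMk measurable_const
    exact hℓmeas.comp h

private lemma crcInf_measurable (hmono : ∀ w, Antitone (ℓ w))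
    (hrc : ∀ w θ, ContinuousWithinAt (ℓ w) (Set.Ici θ) θ)
    (hlim : ∀ w, Tendsto (ℓ w) atTop (nhds 0)) {c : ℝ} (hc : 0 < c)
    {m : ℕ} (j : Fin m) (hℓmeas : Measurable (fun p : 𝒵 × ℝ => ℓ p.1 p.2)) :
    Measurable (fun v : Fin m → 𝒵 => crcInf ℓ c v j) := by
  apply measurable_of_Iic
  intro θ
  have hiff : ∀ v : Fin m → 𝒵, crcInf ℓ c v j ≤ θ ↔
      ((BddBelow {θ' | ∑ i ∈ Finset.univ.erase j, ℓ (v i) θ' ≤ c} ∧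
        ∑ i ∈ Finset.univ.erase j, ℓ (v i) θ ≤ c) ∨
       (¬BddBelow {θ' | ∑ i ∈ Finset.univ.erase j, ℓ (v i) θ' ≤ c} ∧ 0 ≤ θ)) := fun v =>
    crc_key_le_iff _ (crc_eSum_antitone ℓ hmono v j) (crc_eSum_rc ℓ hrc v j)
      (crc_eSum_lim ℓ hlim v j) hc θ
  have hB : MeasurableSet {v : Fin m → 𝒵 |
      ¬BddBelow {θ' | ∑ i ∈ Finset.univ.erase j, ℓ (v i) θ' ≤ c}} := by
    have : {v : Fin m → 𝒵 | ¬BddBelow {θ' | ∑ i ∈ Finset.univ.erase j, ℓ (v i) θ' ≤ c}} =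
        ⋂ q : ℤ, {v | ∑ i ∈ Finset.univ.erase j, ℓ (v i) (q : ℝ) ≤ c} := by
      ext v
      simp only [Set.mem_setOf_eq, Set.mem_iInter]
      exact crc_key_unbdd _ (crc_eSum_antitone ℓ hmono v j) c
    rw [this]
    exact MeasurableSet.iInter fun q =>
      measurableSet_le (crc_eSum_measurable ℓ hℓmeas j _) measurable_const
  have hA : ∀ θ' : ℝ, MeasurableSet {v : Fin m → 𝒵 |
      ∑ i ∈ Finset.univ.erase j, ℓ (v i) θ' ≤ c} := fun θ' =>
    measurableSet_le (crc_eSum_measurable ℓ hℓmeas j _) measurable_const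
  have : (fun v : Fin m → 𝒵 => crcInf ℓ c v j) ⁻¹' Set.Iic θ =
      ({v : Fin m → 𝒵 | ¬BddBelow {θ' | ∑ i ∈ Finset.univ.erase j, ℓ (v i) θ' ≤ c}}ᶜ ∩
        {v | ∑ i ∈ Finset.univ.erase j, ℓ (v i) θ ≤ c}) ∪
      ({v : Fin m → 𝒵 | ¬BddBelow {θ' | ∑ i ∈ Finset.univ.erase j, ℓ (v i) θ' ≤ c}} ∩
        {v | 0 ≤ θ}) := by
    ext v
    simp only [Set.mem_preimage, Set.mem_Iic, Set.mem_union, Set.mem_inter_iff,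
      Set.mem_compl_iff, Set.mem_setOf_eq, not_not]
    rw [hiff v]
  rw [this]
  refine ((hB.compl.inter (hA θ)).union (hB.inter ?_))
  by_cases h0 : 0 ≤ θ
  · simp [h0]
  · simp [h0]

private lemma crcInf_comp {n : ℕ} (ℓ : 𝒵 → ℝ → ℝ) (c : ℝ) (v : Fin (n + 1) → 𝒵)
    (σ : Equiv.Perm (Fin (n + 1))) (j : Fin (n + 1)) :
    crcInf ℓ c (v ∘ σ) j = crcInf ℓ c v (σ j) := by
  unfold crcInf
  congr 1
  ext θ
  simp only [Set.mem_setOf_eq, Function.comp_apply]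
  constructor <;> intro h
  · calc ∑ i ∈ Finset.univ.erase (σ j), ℓ (v i) θ
        = ∑ i ∈ Finset.univ.erase j, ℓ (v (σ i)) θ := by
          refine (Finset.sum_equiv σ (fun i => ?_) (fun i _ => rfl)).symm
          simp [Finset.mem_erase, EmbeddingLike.apply_eq_iff_eq]
      _ ≤ c := h
  · calc ∑ i ∈ Finset.univ.erase j, ℓ (v (σ i)) θ
        = ∑ i ∈ Finset.univ.erase (σ j), ℓ (v i) θ := by
          refine Finset.sum_equiv σ (fun i => ?_) (fun i _ => rfl)
          simp [Finset.mem_erase, EmbeddingLike.apply_eq_iff_eq]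
      _ ≤ c := h

private lemma crcMin_comp {n : ℕ} (ℓ : 𝒵 → ℝ → ℝ) (c : ℝ) (v : Fin (n + 1) → 𝒵)
    (σ : Equiv.Perm (Fin (n + 1))) :
    crcMin ℓ c (v ∘ σ) = crcMin ℓ c v := by
  apply le_antisymm
  · apply Finset.le_inf'
    intro j _
    have : crcInf ℓ c v j = crcInf ℓ c (v ∘ σ) (σ.symm j) := by
      rw [crcInf_comp]; simp
    rw [this]
    exact Finset.inf'_le _ (Finset.mem_univ _)
  · apply Finset.le_inf'
    intro j _
    rw [crcInf_comp]
    exact Finset.inf'_le _ (Finset.mem_univ _)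

end CRCAux

private lemma crc_div_iff (a s α' : ℝ) (ha : 0 < a) :
    (1 / a) * s ≤ α' - 1 / a ↔ s ≤ a * α' - 1 := by
  rw [show ((1 / a) * s ≤ α' - 1 / a ↔ a * ((1 / a) * s) ≤ a * (α' - 1 / a)) from
    (mul_le_mul_iff_right₀ ha).symm, mul_sub, mul_one_div_cancel ha.ne', ← mul_assoc,
    mul_one_div_cancel ha.ne', one_mul]

/-- **Conformal risk control guarantee** for monotone losses: with `θ̂` the smallest
threshold at which the calibration empirical risk (with denominator `n+1`) is at most
`α - 1/(n+1)`, the expected loss on the exchangeable test point is at most `α`. -/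
theorem conformal_risk_control
    {Ω 𝒵 : Type*} [MeasurableSpace Ω] [MeasurableSpace 𝒵]
    (μ : Measure Ω) [IsProbabilityMeasure μ]
    (n : ℕ) (Z : Fin (n + 1) → Ω → 𝒵)
    (ℓ : 𝒵 → ℝ → ℝ) (α : ℝ)
    (hα : α ∈ Set.Ioc (1 / (n + 1 : ℝ)) 1)
    (hZmeas : ∀ i, Measurable (Z i))
    (hℓmeas : Measurable (fun p : 𝒵 × ℝ => ℓ p.1 p.2))
    (hℓ : ∀ w θ, ℓ w θ ∈ Set.Icc (0 : ℝ) 1)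
    (hmono : ∀ w, Antitone (ℓ w))
    (hrc : ∀ w θ, ContinuousWithinAt (ℓ w) (Set.Ici θ) θ)
    (hlim : ∀ w, Tendsto (ℓ w) atTop (nhds 0))
    -- exchangeability
    (hexch : ∀ σ : Equiv.Perm (Fin (n + 1)),
      Measure.map (fun ω => fun i => Z (σ i) ω) μ = Measure.map (fun ω => fun i => Z i ω) μ) :
    (∫ ω, ℓ (Z (Fin.last n) ω)
        (sInf {θ : ℝ | (1 / (n + 1 : ℝ)) * ∑ i : Fin n, ℓ (Z i.castSucc ω) θ
          ≤ α - 1 / (n + 1 : ℝ)}) ∂μ) ≤ α := by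
  obtain ⟨hα1, hα2⟩ := hα
  have hn1 : (0 : ℝ) < (n : ℝ) + 1 := by positivity
  set c : ℝ := ((n : ℝ) + 1) * α - 1 with hc_def
  have hc : 0 < c := by
    have := (div_lt_iff₀ hn1).mp hα1
    nlinarith
  set V : Ω → Fin (n + 1) → 𝒵 := fun ω i => Z i ω with hV
  have hVmeas : Measurable V := measurable_pi_lambda _ hZmeas
  -- identify the statement's threshold with `crcInf ℓ c (V ω) (Fin.last n)`
  have hset : ∀ ω, {θ : ℝ | (1 / (n + 1 : ℝ)) * ∑ i : Fin n, ℓ (Z i.castSucc ω) θ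
      ≤ α - 1 / (n + 1 : ℝ)}
      = {θ | ∑ i ∈ Finset.univ.erase (Fin.last n), ℓ (V ω i) θ ≤ c} := by
    intro ω
    ext θ
    simp only [Set.mem_setOf_eq]
    have hsum : ∑ i : Fin n, ℓ (Z i.castSucc ω) θ
        = ∑ i ∈ Finset.univ.erase (Fin.last n), ℓ (V ω i) θ := by
      rw [Finset.sum_erase_eq_sub (Finset.mem_univ _), Fin.sum_univ_castSucc]
      simp [hV]
    rw [hsum, hc_def]
    exact crc_div_iff _ _ _ hn1
  have hθhat : ∀ ω, sInf {θ : ℝ | (1 / (n + 1 : ℝ)) * ∑ i : Fin n, ℓ (Z i.castSucc ω) θ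
      ≤ α - 1 / (n + 1 : ℝ)} = crcInf ℓ c (V ω) (Fin.last n) := fun ω => by
    rw [hset ω]; rfl
  -- integrands
  have hcInfMeas : ∀ j : Fin (n + 1), Measurable (fun v : Fin (n + 1) → 𝒵 => crcInf ℓ c v j) :=
    fun j => crcInf_measurable ℓ hmono hrc hlim hc j hℓmeas
  have hMinMeas : Measurable (fun v : Fin (n + 1) → 𝒵 => crcMin ℓ c v) := by
    apply measurable_of_Iic
    intro θ
    have : (fun v : Fin (n + 1) → 𝒵 => crcMin ℓ c v) ⁻¹' Set.Iic θ
        = ⋃ j : Fin (n + 1), {v | crcInf ℓ c v j ≤ θ} := by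
      ext v
      simp only [Set.mem_preimage, Set.mem_Iic, Set.mem_iUnion, Set.mem_setOf_eq, crcMin,
        Finset.inf'_le_iff, Finset.mem_univ, true_and]
    rw [this]
    exact MeasurableSet.iUnion fun j => measurableSet_le (hcInfMeas j) measurable_const
  -- the key symmetric function
  set F : (Fin (n + 1) → 𝒵) → ℝ := fun v => ℓ (v (Fin.last n)) (crcMin ℓ c v) with hF
  have hFmeas : Measurable F :=
    hℓmeas.comp ((measurable_pi_apply (Fin.last n)).prodMk hMinMeas)
  -- measurable and bounded loss integrands
  have hTjmeas : ∀ j : Fin (n + 1),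
      Measurable (fun ω => ℓ (Z j ω) (crcMin ℓ c (V ω))) := fun j =>
    hℓmeas.comp ((hZmeas j).prodMk (hMinMeas.comp hVmeas))
  have hbdd : ∀ (g : Ω → ℝ), Measurable g → (∀ ω, g ω ∈ Set.Icc (0 : ℝ) 1) →
      Integrable g μ := by
    intro g hg hb
    refine (integrable_const (1 : ℝ)).mono' hg.aestronglyMeasurable ?_
    filter_upwards with ω
    rw [Real.norm_eq_abs, abs_le]
    exact ⟨by linarith [(hb ω).1], (hb ω).2⟩
  have hTjint : ∀ j : Fin (n + 1),
      Integrable (fun ω => ℓ (Z j ω) (crcMin ℓ c (V ω))) μ := fun j =>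
    hbdd _ (hTjmeas j) (fun ω => hℓ _ _)
  have hGmeas : Measurable (fun ω => ℓ (Z (Fin.last n) ω) (crcInf ℓ c (V ω) (Fin.last n))) :=
    hℓmeas.comp ((hZmeas _).prodMk ((hcInfMeas _).comp hVmeas))
  have hGint : Integrable (fun ω => ℓ (Z (Fin.last n) ω) (crcInf ℓ c (V ω) (Fin.last n))) μ :=
    hbdd _ hGmeas (fun ω => hℓ _ _)
  -- step 1 : pointwise comparison
  have hstep1 : (∫ ω, ℓ (Z (Fin.last n) ω)
        (sInf {θ : ℝ | (1 / (n + 1 : ℝ)) * ∑ i : Fin n, ℓ (Z i.castSucc ω) θ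
          ≤ α - 1 / (n + 1 : ℝ)}) ∂μ)
      ≤ ∫ ω, ℓ (Z (Fin.last n) ω) (crcMin ℓ c (V ω)) ∂μ := by
    have heq : (fun ω => ℓ (Z (Fin.last n) ω)
        (sInf {θ : ℝ | (1 / (n + 1 : ℝ)) * ∑ i : Fin n, ℓ (Z i.castSucc ω) θ
          ≤ α - 1 / (n + 1 : ℝ)}))
        = fun ω => ℓ (Z (Fin.last n) ω) (crcInf ℓ c (V ω) (Fin.last n)) := by
      funext ω; rw [hθhat ω]
    rw [heq]
    refine integral_mono hGint (hTjint (Fin.last n)) ?_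
    intro ω
    exact hmono _ (Finset.inf'_le _ (Finset.mem_univ _))
  -- step 2 : exchangeability
  have hstep2 : ∀ j : Fin (n + 1),
      (∫ ω, ℓ (Z j ω) (crcMin ℓ c (V ω)) ∂μ)
        = ∫ ω, ℓ (Z (Fin.last n) ω) (crcMin ℓ c (V ω)) ∂μ := by
    intro j
    set σ : Equiv.Perm (Fin (n + 1)) := Equiv.swap j (Fin.last n) with hσ
    have hVσ : Measurable (fun ω => fun i => Z (σ i) ω) :=
      measurable_pi_lambda _ fun i => hZmeas _
    have h1 : ∫ v, F v ∂(Measure.map (fun ω => fun i => Z (σ i) ω) μ)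
        = ∫ ω, F (fun i => Z (σ i) ω) ∂μ :=
      integral_map hVσ.aemeasurable hFmeas.aestronglyMeasurable
    have h2 : ∫ v, F v ∂(Measure.map V μ) = ∫ ω, F (V ω) ∂μ :=
      integral_map hVmeas.aemeasurable hFmeas.aestronglyMeasurable
    have h3 : ∀ ω, F (fun i => Z (σ i) ω) = ℓ (Z j ω) (crcMin ℓ c (V ω)) := by
      intro ω
      show ℓ (Z (σ (Fin.last n)) ω) (crcMin ℓ c (V ω ∘ σ)) = ℓ (Z j ω) (crcMin ℓ c (V ω))
      rw [crcMin_comp, hσ, Equiv.swap_apply_right]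
    calc (∫ ω, ℓ (Z j ω) (crcMin ℓ c (V ω)) ∂μ)
        = ∫ ω, F (fun i => Z (σ i) ω) ∂μ := by
          refine integral_congr_ae (Eventually.of_forall fun ω => ?_)
          exact (h3 ω).symm
      _ = ∫ v, F v ∂(Measure.map (fun ω => fun i => Z (σ i) ω) μ) := h1.symm
      _ = ∫ v, F v ∂(Measure.map V μ) := by rw [hexch σ]
      _ = ∫ ω, F (V ω) ∂μ := h2
      _ = ∫ ω, ℓ (Z (Fin.last n) ω) (crcMin ℓ c (V ω)) ∂μ := rfl
  -- step 3 : pointwise bound on the total risk at `crcMin`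
  have hsum_pt : ∀ v : Fin (n + 1) → 𝒵,
      ∑ j : Fin (n + 1), ℓ (v j) (crcMin ℓ c v) ≤ ((n : ℝ) + 1) * α := by
    intro v
    obtain ⟨j₀, _, hj₀⟩ := Finset.exists_mem_eq_inf' Finset.univ_nonempty
      (fun j => crcInf ℓ c v j)
    have h1 : ∑ i ∈ Finset.univ.erase j₀, ℓ (v i) (crcMin ℓ c v) ≤ c := by
      rw [crcMin, hj₀]
      exact crcInf_mem ℓ hmono hrc hlim hc v j₀
    have h2 : ℓ (v j₀) (crcMin ℓ c v) ≤ 1 := (hℓ _ _).2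
    calc ∑ j : Fin (n + 1), ℓ (v j) (crcMin ℓ c v)
        = ℓ (v j₀) (crcMin ℓ c v) + ∑ i ∈ Finset.univ.erase j₀, ℓ (v i) (crcMin ℓ c v) :=
          (Finset.add_sum_erase _ _ (Finset.mem_univ j₀)).symm
      _ ≤ 1 + c := add_le_add h2 h1
      _ = ((n : ℝ) + 1) * α := by rw [hc_def]; ring
  -- conclude
  have hlast : (∫ ω, ℓ (Z (Fin.last n) ω) (crcMin ℓ c (V ω)) ∂μ) ≤ α := by
    have hsum_eq : ∑ j : Fin (n + 1), ∫ ω, ℓ (Z j ω) (crcMin ℓ c (V ω)) ∂μ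
        = ((n : ℝ) + 1) * ∫ ω, ℓ (Z (Fin.last n) ω) (crcMin ℓ c (V ω)) ∂μ := by
      rw [Finset.sum_congr rfl (fun j _ => hstep2 j), Finset.sum_const, Finset.card_univ,
        Fintype.card_fin, nsmul_eq_mul]
      push_cast
      ring
    have hint_sum : (∫ ω, ∑ j : Fin (n + 1), ℓ (Z j ω) (crcMin ℓ c (V ω)) ∂μ)
        = ∑ j : Fin (n + 1), ∫ ω, ℓ (Z j ω) (crcMin ℓ c (V ω)) ∂μ :=
      integral_finset_sum _ fun j _ => hTjint j
    have hbound : (∫ ω, ∑ j : Fin (n + 1), ℓ (Z j ω) (crcMin ℓ c (V ω)) ∂μ)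
        ≤ ((n : ℝ) + 1) * α := by
      have := integral_mono (integrable_finset_sum _ fun j _ => hTjint j)
        (integrable_const (((n : ℝ) + 1) * α)) (fun ω => hsum_pt (V ω))
      simpa using this
    rw [hint_sum, hsum_eq] at hbound
    calc (∫ ω, ℓ (Z (Fin.last n) ω) (crcMin ℓ c (V ω)) ∂μ)
        = (1 / ((n : ℝ) + 1)) * (((n : ℝ) + 1)
            * ∫ ω, ℓ (Z (Fin.last n) ω) (crcMin ℓ c (V ω)) ∂μ) := by
          field_simp
      _ ≤ (1 / ((n : ℝ) + 1)) * (((n : ℝ) + 1) * α) := by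
          apply mul_le_mul_of_nonneg_left hbound (by positivity)
      _ = α := by field_simp
  exact le_trans hstep1 hlast
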